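/- arXiv:1410.0621 — 6 statements merged into one kernel-verified Lean document; each statement's English description precedes it below -/
import Mathlib

section
/- Let λ_3, λ_4, …, λ_n, λ_1 ∈ ℂ² (indices cyclic mod n) be spinors with all consecutive angle brackets ⟨i,i+1⟩ ≠ 0, and let Q be the (n−2)×(n−2) symmetric tridiagonal matrix with rows/columns indexed by i = 3,…,n, diagonal entries Q_{ii} = ⟨i+1,i−1⟩/(⟨i−1,i⟩⟨i,i+1⟩) (with indices mod n) and off-diagonal entries Q_{i,i+1} = Q_{i+1,i} = 1/⟨i,i+1⟩, all other entries zero. Then det Q = ± ⟨12⟩ / (⟨23⟩⟨34⟩⋯⟨n−1,n⟩⟨n1⟩); in particular |det Q| = ⟨12⟩² / (⟨12⟩⟨23⟩⋯⟨n1⟩). -/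
/-- The angle bracket `⟨ij⟩ = λ_i^1 λ_j^2 - λ_i^2 λ_j^1`, for spinors indexed cyclically. -/
def ang {n : ℕ} (lam : ZMod n → Fin 2 → ℂ) (i j : ZMod n) : ℂ :=
  lam i 0 * lam j 1 - lam i 1 * lam j 0

/-- The label (in `ZMod n`) of the `k`-th row/column of the matrix `Q`, whose rows and columns
are indexed by particle labels `3, …, n`. -/
def lbl {n : ℕ} (k : Fin (n - 2)) : ZMod n := ((k : ℕ) + 3 : ℕ)

/-- The `(n-2) × (n-2)` symmetric tridiagonal matrix `Q` with rows/columns indexed by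
`i = 3, …, n`, diagonal entries `Q_{ii} = ⟨i+1,i−1⟩/(⟨i−1,i⟩⟨i,i+1⟩)` (indices mod `n`) and
off-diagonal entries `Q_{i,i+1} = Q_{i+1,i} = 1/⟨i,i+1⟩`. -/
noncomputable def Qmat {n : ℕ} (lam : ZMod n → Fin 2 → ℂ) :
    Matrix (Fin (n - 2)) (Fin (n - 2)) ℂ :=
  Matrix.of fun i j =>
    if i = j then
      ang lam (lbl i + 1) (lbl i - 1) / (ang lam (lbl i - 1) (lbl i) * ang lam (lbl i) (lbl i + 1))
    else if (j : ℕ) = (i : ℕ) + 1 then 1 / ang lam (lbl i) (lbl i + 1)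
    else if (i : ℕ) = (j : ℕ) + 1 then 1 / ang lam (lbl j) (lbl j + 1)
    else 0

lemma ang_swap {n : ℕ} (lam : ZMod n → Fin 2 → ℂ) (a b : ZMod n) :
    ang lam a b = - ang lam b a := by simp [ang]; ring

def tri {R : Type*} [CommRing R] (d o : ℕ → R) (m : ℕ) : Matrix (Fin m) (Fin m) R :=
  Matrix.of fun i j =>
    if (i : ℕ) = (j : ℕ) then d (i : ℕ)
    else if (j : ℕ) = (i : ℕ) + 1 then o (i : ℕ)
    else if (i : ℕ) = (j : ℕ) + 1 then o (j : ℕ)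
    else 0

lemma tri_submatrix {R : Type*} [CommRing R] (d o : ℕ → R) (m : ℕ) :
    (tri d o (m + 1)).submatrix Fin.castSucc Fin.castSucc = tri d o m := by
  ext i j
  simp [tri]

lemma tri_det_rec {R : Type*} [CommRing R] (d o : ℕ → R) (m : ℕ) :
    (tri d o (m + 2)).det =
      d (m + 1) * (tri d o (m + 1)).det - o m ^ 2 * (tri d o m).det := by
  have hm2 : (m : ℕ) < m + 2 := by omega
  set A := tri d o (m + 2) with hA
  set jm : Fin (m + 2) := ⟨m, hm2⟩ with hjm
  have hAlast : ∀ j : Fin (m + 2), (j : ℕ) ≠ m → (j : ℕ) ≠ m + 1 →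
      A (Fin.last (m + 1)) j = 0 := by
    intro j h1 h2
    have hj : (j : ℕ) < m + 2 := j.isLt
    simp only [hA, tri, Matrix.of_apply, Fin.val_last]
    rw [if_neg (by omega), if_neg (by omega), if_neg (by omega)]
  rw [Matrix.det_succ_row A (Fin.last (m + 1))]
  rw [← Finset.sum_erase_add _ _ (Finset.mem_univ (Fin.last (m + 1)))]
  have hjmmem : jm ∈ Finset.univ.erase (Fin.last (m + 1)) := by
    refine Finset.mem_erase.mpr ⟨?_, Finset.mem_univ _⟩
    simp [hjm, Fin.ext_iff]
  rw [Finset.sum_eq_single_of_mem jm hjmmem (by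
    intro b _ hb
    have hbmem := Finset.mem_erase.mp ‹b ∈ Finset.univ.erase (Fin.last (m+1))›
    have h1 : (b : ℕ) ≠ m := fun h => hb (Fin.ext h)
    have h2 : (b : ℕ) ≠ m + 1 := fun h => hbmem.1 (Fin.ext h)
    simp [hAlast b h1 h2])]
  -- compute the last-diagonal term
  have hdiag : A (Fin.last (m + 1)) (Fin.last (m + 1)) = d (m + 1) := by
    simp [hA, tri]
  have hsub : (A.submatrix (Fin.last (m + 1)).succAbove (Fin.last (m + 1)).succAbove)
      = tri d o (m + 1) := by
    rw [Fin.succAbove_last, hA, tri_submatrix]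
  have hsign1 : ((-1 : R)) ^ ((Fin.last (m + 1) : ℕ) + (Fin.last (m + 1) : ℕ)) = 1 :=
    Even.neg_one_pow ⟨m + 1, by simp [Fin.val_last]⟩
  -- compute the off-diagonal term
  have hoff : A (Fin.last (m + 1)) jm = o m := by
    simp only [hA, tri, Matrix.of_apply, Fin.val_last, hjm]
    rw [if_neg (by omega), if_neg (by omega)]
    simp
  have hsign2 : ((-1 : R)) ^ ((Fin.last (m + 1) : ℕ) + (jm : ℕ)) = -1 :=
    Odd.neg_one_pow ⟨m, by simp only [Fin.val_last, hjm]; omega⟩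
  -- the minor at the off-diagonal position
  have hminor : (A.submatrix (Fin.last (m + 1)).succAbove jm.succAbove).det
      = o m * (tri d o m).det := by
    set B := A.submatrix (Fin.last (m + 1)).succAbove jm.succAbove with hB
    have hBcol : ∀ i : Fin (m + 1), (i : ℕ) ≠ m → B i (Fin.last m) = 0 := by
      intro i hi
      have hsa : (jm.succAbove (Fin.last m) : ℕ) = m + 1 := by
        rw [Fin.succAbove_of_le_castSucc _ _ (by simp [hjm, Fin.le_def])]
        simp
      have : B i (Fin.last m) = A (Fin.castSucc i) (jm.succAbove (Fin.last m)) := by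
        simp [hB, Fin.succAbove_last]
      rw [this]
      have hiv : (i : ℕ) < m + 1 := i.isLt
      simp only [hA, tri, Matrix.of_apply, Fin.coe_castSucc, hsa]
      rw [if_neg (by omega), if_neg (by omega), if_neg (by omega)]
    rw [Matrix.det_succ_column B (Fin.last m)]
    rw [Finset.sum_eq_single_of_mem (Fin.last m) (Finset.mem_univ _) (by
      intro b _ hb
      have h1 : (b : ℕ) ≠ m := fun h => hb (Fin.ext (by simp [h]))
      rw [hBcol b h1, mul_zero, zero_mul])]
    have hBll : B (Fin.last m) (Fin.last m) = o m := by
      have hsa : (jm.succAbove (Fin.last m) : ℕ) = m + 1 := by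
        rw [Fin.succAbove_of_le_castSucc _ _ (by simp [hjm, Fin.le_def])]
        simp
      have : B (Fin.last m) (Fin.last m) = A (Fin.castSucc (Fin.last m)) (jm.succAbove (Fin.last m)) := by
        simp [hB, Fin.succAbove_last]
      rw [this]
      simp only [hA, tri, Matrix.of_apply, Fin.coe_castSucc, Fin.val_last, hsa]
      rw [if_neg (by omega)]
      simp
    have hBsub : (B.submatrix (Fin.last m).succAbove (Fin.last m).succAbove) = tri d o m := by
      rw [Fin.succAbove_last]
      ext k l
      have hsa : (jm.succAbove (Fin.castSucc l) : ℕ) = (l : ℕ) := by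
        rw [Fin.succAbove_of_castSucc_lt _ _ (by simp only [hjm, Fin.lt_def, Fin.coe_castSucc]; exact l.isLt)]
        simp
      have hlv : (l : ℕ) < m := l.isLt
      have hkv : (k : ℕ) < m := k.isLt
      simp only [Matrix.submatrix_apply, hB, Fin.succAbove_last]
      simp only [hA, tri, Matrix.of_apply, Fin.coe_castSucc, hsa]
    have hsign3 : ((-1 : R)) ^ ((Fin.last m : ℕ) + (Fin.last m : ℕ)) = 1 :=
      Even.neg_one_pow ⟨m, by simp [Fin.val_last]⟩
    rw [hBll, hBsub, hsign3, one_mul]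
  rw [hdiag, hsub, hsign1, hoff, hsign2, hminor]
  ring

noncomputable def dd {n : ℕ} (lam : ZMod n → Fin 2 → ℂ) (k : ℕ) : ℂ :=
  ang lam ((k + 4 : ℕ) : ZMod n) ((k + 2 : ℕ) : ZMod n) /
    (ang lam ((k + 2 : ℕ) : ZMod n) ((k + 3 : ℕ) : ZMod n) *
     ang lam ((k + 3 : ℕ) : ZMod n) ((k + 4 : ℕ) : ZMod n))

noncomputable def oo {n : ℕ} (lam : ZMod n → Fin 2 → ℂ) (k : ℕ) : ℂ :=
  1 / ang lam ((k + 3 : ℕ) : ZMod n) ((k + 4 : ℕ) : ZMod n)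

lemma ang_ne {n : ℕ} (lam : ZMod n → Fin 2 → ℂ)
    (hang : ∀ i : ZMod n, ang lam i (i + 1) ≠ 0) (k : ℕ) :
    ang lam ((k + 2 : ℕ) : ZMod n) ((k + 3 : ℕ) : ZMod n) ≠ 0 := by
  have h := hang ((k + 2 : ℕ) : ZMod n)
  have e : ((k + 3 : ℕ) : ZMod n) = ((k + 2 : ℕ) : ZMod n) + 1 := by push_cast; ring
  rw [e]; exact h

lemma Qmat_eq_tri {n : ℕ} (lam : ZMod n → Fin 2 → ℂ) :
    Qmat lam = tri (dd lam) (oo lam) (n - 2) := by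
  have e1 : ∀ k : Fin (n - 2), lbl k + 1 = (((k : ℕ) + 4 : ℕ) : ZMod n) := by
    intro k; rw [lbl]; push_cast; ring
  have e2 : ∀ k : Fin (n - 2), lbl k - 1 = (((k : ℕ) + 2 : ℕ) : ZMod n) := by
    intro k; rw [lbl]; push_cast; ring
  have e3 : ∀ k : Fin (n - 2), lbl k = (((k : ℕ) + 3 : ℕ) : ZMod n) := fun k => rfl
  ext i j
  simp only [Qmat, tri, Matrix.of_apply]
  by_cases h1 : i = j
  · subst h1
    rw [if_pos rfl, if_pos rfl, e1 i, e2 i, e3 i]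
    rfl
  · rw [if_neg h1, if_neg (fun h => h1 (Fin.ext h))]
    by_cases h2 : (j : ℕ) = (i : ℕ) + 1
    · rw [if_pos h2, if_pos h2, e1 i, e3 i]
      rfl
    · rw [if_neg h2, if_neg h2]
      by_cases h3 : (i : ℕ) = (j : ℕ) + 1
      · rw [if_pos h3, if_pos h3, e1 j, e3 j]
        rfl
      · rw [if_neg h3, if_neg h3]

lemma tri_det_formula {n : ℕ} (lam : ZMod n → Fin 2 → ℂ)
    (hang : ∀ i : ZMod n, ang lam i (i + 1) ≠ 0) (m : ℕ) :
    (tri (dd lam) (oo lam) m).det =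
      (-1) ^ m * ang lam 2 ((m + 3 : ℕ) : ZMod n) /
        ∏ j ∈ Finset.range (m + 1), ang lam ((j + 2 : ℕ) : ZMod n) ((j + 3 : ℕ) : ZMod n) := by
  induction m using Nat.strong_induction_on with
  | _ m ih =>
    match m with
    | 0 =>
      have h := ang_ne lam hang 0
      have e2 : ((0 + 2 : ℕ) : ZMod n) = 2 := by norm_num
      rw [Matrix.det_fin_zero, pow_zero, one_mul, Finset.prod_range_one, e2, div_self (e2 ▸ h)]
    | 1 =>
      have h1 : (tri (dd lam) (oo lam) 1).det = dd lam 0 := by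
        rw [Matrix.det_fin_one]; simp [tri]
      rw [h1, Finset.prod_range_succ, Finset.prod_range_one, dd,
        ang_swap lam ((0 + 4 : ℕ) : ZMod n) ((0 + 2 : ℕ) : ZMod n)]
      norm_num
    | (m + 2) =>
      rw [tri_det_rec, ih (m + 1) (by omega), ih m (by omega)]
      show ang lam ((m + 5 : ℕ) : ZMod n) ((m + 3 : ℕ) : ZMod n) /
            (ang lam ((m + 3 : ℕ) : ZMod n) ((m + 4 : ℕ) : ZMod n) *
             ang lam ((m + 4 : ℕ) : ZMod n) ((m + 5 : ℕ) : ZMod n)) *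
            ((-1) ^ (m + 1) * ang lam 2 ((m + 4 : ℕ) : ZMod n) /
              ∏ j ∈ Finset.range (m + 2), ang lam ((j + 2 : ℕ) : ZMod n) ((j + 3 : ℕ) : ZMod n)) -
          (1 / ang lam ((m + 3 : ℕ) : ZMod n) ((m + 4 : ℕ) : ZMod n)) ^ 2 *
            ((-1) ^ m * ang lam 2 ((m + 3 : ℕ) : ZMod n) /
              ∏ j ∈ Finset.range (m + 1), ang lam ((j + 2 : ℕ) : ZMod n) ((j + 3 : ℕ) : ZMod n)) =
          (-1) ^ (m + 2) * ang lam 2 ((m + 5 : ℕ) : ZMod n) /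
            ∏ j ∈ Finset.range (m + 3), ang lam ((j + 2 : ℕ) : ZMod n) ((j + 3 : ℕ) : ZMod n)
      have eP2 : (∏ j ∈ Finset.range (m + 2), ang lam ((j + 2 : ℕ) : ZMod n) ((j + 3 : ℕ) : ZMod n))
          = (∏ j ∈ Finset.range (m + 1), ang lam ((j + 2 : ℕ) : ZMod n) ((j + 3 : ℕ) : ZMod n)) *
            ang lam ((m + 3 : ℕ) : ZMod n) ((m + 4 : ℕ) : ZMod n) := by
        rw [Finset.prod_range_succ]
      have eP3 : (∏ j ∈ Finset.range (m + 3), ang lam ((j + 2 : ℕ) : ZMod n) ((j + 3 : ℕ) : ZMod n))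
          = (∏ j ∈ Finset.range (m + 1), ang lam ((j + 2 : ℕ) : ZMod n) ((j + 3 : ℕ) : ZMod n)) *
            ang lam ((m + 3 : ℕ) : ZMod n) ((m + 4 : ℕ) : ZMod n) *
            ang lam ((m + 4 : ℕ) : ZMod n) ((m + 5 : ℕ) : ZMod n) := by
        rw [Finset.prod_range_succ, Finset.prod_range_succ]
      have hx : ang lam ((m + 3 : ℕ) : ZMod n) ((m + 4 : ℕ) : ZMod n) ≠ 0 := ang_ne lam hang (m + 1)
      have hy : ang lam ((m + 4 : ℕ) : ZMod n) ((m + 5 : ℕ) : ZMod n) ≠ 0 := ang_ne lam hang (m + 2)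
      have hp : (∏ j ∈ Finset.range (m + 1), ang lam ((j + 2 : ℕ) : ZMod n) ((j + 3 : ℕ) : ZMod n)) ≠ 0 :=
        Finset.prod_ne_zero_iff.mpr fun j _ => ang_ne lam hang j
      have key : ang lam ((m + 3 : ℕ) : ZMod n) ((m + 5 : ℕ) : ZMod n) * ang lam 2 ((m + 4 : ℕ) : ZMod n)
          = ang lam 2 ((m + 3 : ℕ) : ZMod n) * ang lam ((m + 4 : ℕ) : ZMod n) ((m + 5 : ℕ) : ZMod n)
            + ang lam ((m + 3 : ℕ) : ZMod n) ((m + 4 : ℕ) : ZMod n) * ang lam 2 ((m + 5 : ℕ) : ZMod n) := by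
        simp [ang]; ring
      rw [ang_swap lam ((m + 5 : ℕ) : ZMod n) ((m + 3 : ℕ) : ZMod n), eP2, eP3]
      set P := ∏ j ∈ Finset.range (m + 1), ang lam ((j + 2 : ℕ) : ZMod n) ((j + 3 : ℕ) : ZMod n) with hP
      set X := ang lam ((m + 3 : ℕ) : ZMod n) ((m + 4 : ℕ) : ZMod n) with hX
      set Y := ang lam ((m + 4 : ℕ) : ZMod n) ((m + 5 : ℕ) : ZMod n) with hY
      set Z := ang lam ((m + 3 : ℕ) : ZMod n) ((m + 5 : ℕ) : ZMod n) with hZ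
      set A2 := ang lam 2 ((m + 3 : ℕ) : ZMod n) with hA2
      set B2 := ang lam 2 ((m + 4 : ℕ) : ZMod n) with hB2
      set C2 := ang lam 2 ((m + 5 : ℕ) : ZMod n) with hC2
      simp only [pow_succ]
      field_simp
      linear_combination key

/-- `det Q = ± ⟨12⟩ / (⟨23⟩⟨34⟩⋯⟨n−1,n⟩⟨n1⟩)`; in particular
`|det Q| = ⟨12⟩² / (⟨12⟩⟨23⟩⋯⟨n1⟩)`. -/
theorem det_Qmat {n : ℕ} [NeZero n] (hn : 4 ≤ n) (lam : ZMod n → Fin 2 → ℂ)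
    (hang : ∀ i : ZMod n, ang lam i (i + 1) ≠ 0) :
    ((Qmat lam).det =
        ang lam 1 2 / ∏ j ∈ Finset.range (n - 1),
          ang lam ((j + 2 : ℕ) : ZMod n) ((j + 3 : ℕ) : ZMod n) ∨
      (Qmat lam).det =
        -(ang lam 1 2 / ∏ j ∈ Finset.range (n - 1),
          ang lam ((j + 2 : ℕ) : ZMod n) ((j + 3 : ℕ) : ZMod n))) ∧
    ‖(Qmat lam).det‖ =
      ‖(ang lam 1 2) ^ 2 / ∏ i : ZMod n, ang lam i (i + 1)‖ := by
  obtain ⟨m, rfl⟩ : ∃ m, n = m + 2 := ⟨n - 2, by omega⟩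
  simp only [show m + 2 - 1 = m + 1 from rfl]
  have h12 : ang lam 1 2 ≠ 0 := by
    have h := hang 1
    rwa [one_add_one_eq_two] at h
  have hcast : ((m + 3 : ℕ) : ZMod (m + 2)) = 1 := by
    have e : ((m + 3 : ℕ) : ZMod (m + 2)) = ((m + 2 : ℕ) : ZMod (m + 2)) + 1 := by push_cast; ring
    rw [e, ZMod.natCast_self, zero_add]
  have hdet : (Qmat lam).det = (-1) ^ m * (-ang lam 1 2) /
      ∏ j ∈ Finset.range (m + 1), ang lam ((j + 2 : ℕ) : ZMod (m + 2)) ((j + 3 : ℕ) : ZMod (m + 2)) := by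
    have e1 : (Qmat lam).det = (tri (dd lam) (oo lam) m).det := by
      rw [Qmat_eq_tri]
      exact rfl
    rw [e1, tri_det_formula lam hang m, hcast, ang_swap lam 2 1]
  have hdisj : (Qmat lam).det =
      ang lam 1 2 / ∏ j ∈ Finset.range (m + 1),
        ang lam ((j + 2 : ℕ) : ZMod (m + 2)) ((j + 3 : ℕ) : ZMod (m + 2)) ∨
      (Qmat lam).det =
      -(ang lam 1 2 / ∏ j ∈ Finset.range (m + 1),
        ang lam ((j + 2 : ℕ) : ZMod (m + 2)) ((j + 3 : ℕ) : ZMod (m + 2))) := by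
    rcases Nat.even_or_odd m with he | ho
    · right
      rw [hdet, he.neg_one_pow]
      ring
    · left
      rw [hdet, ho.neg_one_pow]
      ring
  refine ⟨hdisj, ?_⟩
  have habs : ‖(Qmat lam).det‖ = ‖(ang lam 1 2 /
      ∏ j ∈ Finset.range (m + 1), ang lam ((j + 2 : ℕ) : ZMod (m + 2)) ((j + 3 : ℕ) : ZMod (m + 2)))‖ := by
    rcases hdisj with h | h
    · rw [h]
    · rw [h, norm_neg]
  have hstep1 : (∏ i : ZMod (m + 2), ang lam i (i + 1)) =
      ∏ j ∈ Finset.range (m + 2), ang lam ((j : ℕ) : ZMod (m + 2)) (((j : ℕ) : ZMod (m + 2)) + 1) := by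
    refine Finset.prod_nbij' (fun a => ZMod.val a) (fun b => ((b : ℕ) : ZMod (m + 2)))
      ?_ ?_ ?_ ?_ ?_
    · intro a _; exact Finset.mem_range.mpr (ZMod.val_lt a)
    · intro b _; exact Finset.mem_univ _
    · intro a _; exact ZMod.natCast_rightInverse a
    · intro b hb; exact ZMod.val_cast_of_lt (Finset.mem_range.mp hb)
    · intro a _
      rw [ZMod.natCast_rightInverse a]
  have hstep2 : (∏ j ∈ Finset.range (m + 2),
        ang lam ((j : ℕ) : ZMod (m + 2)) (((j : ℕ) : ZMod (m + 2)) + 1)) =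
      ((∏ j ∈ Finset.range m,
        ang lam ((j + 2 : ℕ) : ZMod (m + 2)) (((j + 2 : ℕ) : ZMod (m + 2)) + 1)) *
        ang lam ((1 : ℕ) : ZMod (m + 2)) (((1 : ℕ) : ZMod (m + 2)) + 1)) *
        ang lam ((0 : ℕ) : ZMod (m + 2)) (((0 : ℕ) : ZMod (m + 2)) + 1) := by
    rw [Finset.prod_range_succ', Finset.prod_range_succ']
  have hstep3 : (∏ j ∈ Finset.range (m + 1),
        ang lam ((j + 2 : ℕ) : ZMod (m + 2)) ((j + 3 : ℕ) : ZMod (m + 2))) =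
      (∏ j ∈ Finset.range m,
        ang lam ((j + 2 : ℕ) : ZMod (m + 2)) (((j + 2 : ℕ) : ZMod (m + 2)) + 1)) *
        ang lam ((0 : ℕ) : ZMod (m + 2)) (((0 : ℕ) : ZMod (m + 2)) + 1) := by
    rw [Finset.prod_range_succ]
    congr 1
    · refine Finset.prod_congr rfl fun j _ => ?_
      rw [show ((j + 3 : ℕ) : ZMod (m + 2)) = ((j + 2 : ℕ) : ZMod (m + 2)) + 1 from by push_cast; ring]
    · rw [show ((m + 2 : ℕ) : ZMod (m + 2)) = ((0 : ℕ) : ZMod (m + 2)) from by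
          rw [ZMod.natCast_self]; norm_num,
        show ((m + 3 : ℕ) : ZMod (m + 2)) = ((0 : ℕ) : ZMod (m + 2)) + 1 from by
          rw [hcast]; norm_num]
  have h1eq : ang lam ((1 : ℕ) : ZMod (m + 2)) (((1 : ℕ) : ZMod (m + 2)) + 1) = ang lam 1 2 := by
    norm_num
  have hfull : (∏ i : ZMod (m + 2), ang lam i (i + 1)) = ang lam 1 2 *
      ∏ j ∈ Finset.range (m + 1), ang lam ((j + 2 : ℕ) : ZMod (m + 2)) ((j + 3 : ℕ) : ZMod (m + 2)) := by
    rw [hstep1, hstep2, hstep3, h1eq]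
    ring
  rw [habs, hfull, sq, mul_div_mul_left _ _ h12]
end

section
/- Let λ_1, λ_2 ∈ ℂ² with ⟨12⟩ ≠ 0 and let Q be the (n−2)×(n−2) symmetric tridiagonal matrix of the previous statements (indices î, ĵ ∈ {3,…,n}, all ⟨i,i+1⟩ ≠ 0). Define Q⁻¹_{p̂ĵ} = −⟨1ĵ⟩⟨2p̂⟩/⟨12⟩ for ĵ ≥ p̂ and Q⁻¹_{p̂ĵ} = −⟨1p̂⟩⟨2ĵ⟩/⟨12⟩ for ĵ ≤ p̂. Then Σ_{p̂=3}^{n} Q_{îp̂} Q⁻¹_{p̂ĵ} = δ_{îĵ}, i.e. this matrix is the inverse of Q. -/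
/-- The claimed inverse: `Q⁻¹_{p̂ĵ} = −⟨1ĵ⟩⟨2p̂⟩/⟨12⟩` for `ĵ ≥ p̂` and
`Q⁻¹_{p̂ĵ} = −⟨1p̂⟩⟨2ĵ⟩/⟨12⟩` for `ĵ ≤ p̂`. -/
noncomputable def Qinv {n : ℕ} (lam : ZMod n → Fin 2 → ℂ) :
    Matrix (Fin (n - 2)) (Fin (n - 2)) ℂ :=
  Matrix.of fun p j =>
    if (p : ℕ) ≤ (j : ℕ) then -(ang lam 1 (lbl j) * ang lam 2 (lbl p)) / ang lam 1 2
    else -(ang lam 1 (lbl p) * ang lam 2 (lbl j)) / ang lam 1 2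


lemma Qmat_diag {n : ℕ} (lam : ZMod n → Fin 2 → ℂ) (i p : Fin (n-2)) (h : i = p) :
    Qmat lam i p = ang lam (lbl i + 1) (lbl i - 1) /
      (ang lam (lbl i - 1) (lbl i) * ang lam (lbl i) (lbl i + 1)) := by
  subst h; simp only [Qmat, Matrix.of_apply, if_true]

lemma Qmat_right {n : ℕ} (lam : ZMod n → Fin 2 → ℂ) (i p : Fin (n-2))
    (h : (p : ℕ) = (i : ℕ) + 1) :
    Qmat lam i p = 1 / ang lam (lbl i) (lbl i + 1) := by
  simp only [Qmat, Matrix.of_apply]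
  rw [if_neg (by simp only [Fin.ext_iff]; omega), if_pos h]

lemma Qmat_left {n : ℕ} (lam : ZMod n → Fin 2 → ℂ) (i p : Fin (n-2))
    (h : (i : ℕ) = (p : ℕ) + 1) :
    Qmat lam i p = 1 / ang lam (lbl p) (lbl p + 1) := by
  simp only [Qmat, Matrix.of_apply]
  rw [if_neg (by simp only [Fin.ext_iff]; omega), if_neg (by omega), if_pos h]

lemma Qinv_le {n : ℕ} (lam : ZMod n → Fin 2 → ℂ) (p j : Fin (n-2)) (h : (p : ℕ) ≤ (j : ℕ)) :
    Qinv lam p j = -(ang lam 1 (lbl j) * ang lam 2 (lbl p)) / ang lam 1 2 := by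
  simp only [Qinv, Matrix.of_apply, if_pos h]

lemma Qinv_ge {n : ℕ} (lam : ZMod n → Fin 2 → ℂ) (p j : Fin (n-2)) (h : (j : ℕ) ≤ (p : ℕ)) :
    Qinv lam p j = -(ang lam 1 (lbl p) * ang lam 2 (lbl j)) / ang lam 1 2 := by
  simp only [Qinv, Matrix.of_apply]
  by_cases he : (p : ℕ) ≤ (j : ℕ)
  · have : p = j := Fin.ext (le_antisymm he h)
    subst this; rw [if_pos he]
  · rw [if_neg he]

set_option maxHeartbeats 1600000 in
/-- `Σ_{p̂=3}^{n} Q_{îp̂} Q⁻¹_{p̂ĵ} = δ_{îĵ}`: the matrix `Qinv` is the inverse of `Q`. -/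
theorem Qmat_mul_Qinv {n : ℕ} [NeZero n] (hn : 4 ≤ n) (lam : ZMod n → Fin 2 → ℂ)
    (h12 : ang lam 1 2 ≠ 0) (hang : ∀ i : ZMod n, ang lam i (i + 1) ≠ 0) :
    ∀ i j : Fin (n - 2),
      ∑ p : Fin (n - 2), Qmat lam i p * Qinv lam p j = if i = j then 1 else 0 := by
  intro i j
  have hm : 2 ≤ n - 2 := by omega
  set F : ℕ → ℂ := fun k => if h : k < n - 2 then Qmat lam i ⟨k, h⟩ * Qinv lam ⟨k, h⟩ j else 0
    with hF
  have hsum : ∑ p : Fin (n - 2), Qmat lam i p * Qinv lam p j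
      = ∑ k ∈ Finset.range (n - 2), F k := by
    rw [← Fin.sum_univ_eq_sum_range]
    refine Finset.sum_congr rfl fun p _ => ?_
    simp [hF, p.isLt]
  rw [hsum]
  have hQ0 : ∀ (k : ℕ) (h : k < n - 2), k + 1 ≠ (i : ℕ) → k ≠ (i : ℕ) → k ≠ (i : ℕ) + 1 →
      Qmat lam i ⟨k, h⟩ = 0 := by
    intro k h h1 h2 h3
    simp only [Qmat, Matrix.of_apply, Fin.ext_iff]
    rw [if_neg (by omega), if_neg (by omega), if_neg (by omega)]
  by_cases hi0 : (i : ℕ) = 0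
  · -- first row
    have h0 : (0:ℕ) < n - 2 := by omega
    have h1 : (1:ℕ) < n - 2 := by omega
    have hred : ∑ k ∈ Finset.range (n - 2), F k = F 0 + F 1 := by
      rw [← Finset.sum_subset (s₁ := ({0, 1} : Finset ℕ))
        (by intro x hx; simp at hx; simp; omega)
        (by
          intro k hk hk2
          simp at hk hk2
          rw [hF]; simp only
          rw [dif_pos hk, hQ0 k hk (by omega) (by omega) (by omega), zero_mul])]
      rw [Finset.sum_pair (by norm_num)]
    rw [hred, hF]; simp only
    rw [dif_pos h0, dif_pos h1]
    have hi : i = ⟨0, h0⟩ := Fin.ext hi0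
    have li : lbl i = 3 := by rw [hi]; simp only [lbl]; norm_num
    have l0 : lbl (⟨0, h0⟩ : Fin (n - 2)) = 3 := by simp only [lbl]; norm_num
    have l1 : lbl (⟨1, h1⟩ : Fin (n - 2)) = 4 := by simp only [lbl]; norm_num
    have e34 : (3:ZMod n) + 1 = 4 := by norm_num
    have e32 : (3:ZMod n) - 1 = 2 := by norm_num
    have h23 : ang lam 2 3 ≠ 0 := by
      have := hang 2; rwa [show (2:ZMod n) + 1 = 3 from by norm_num] at this
    have h34 : ang lam 3 4 ≠ 0 := by
      have := hang 3; rwa [e34] at this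
    rw [Qmat_diag lam i ⟨0, h0⟩ hi, Qmat_right lam i ⟨1, h1⟩ (by show 1 = (i:ℕ) + 1; omega),
      Qinv_le lam ⟨0, h0⟩ j (Nat.zero_le _)]
    by_cases hj0 : (j : ℕ) = 0
    · have hij : i = j := Fin.ext (by omega)
      rw [if_pos hij]
      have lj : lbl j = 3 := by rw [← hij, li]
      rw [Qinv_ge lam ⟨1, h1⟩ j (by show (j:ℕ) ≤ 1; omega)]
      rw [li, l0, l1, lj, e34, e32]
      field_simp
      simp only [ang]; ring
    · rw [if_neg (by intro he; rw [he] at hi0; exact hj0 hi0)]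
      rw [Qinv_le lam ⟨1, h1⟩ j (by show 1 ≤ (j:ℕ); omega)]
      rw [li, l0, l1, e34, e32]
      field_simp
      simp only [ang]; ring
  · by_cases hil : (i : ℕ) = n - 3
    · -- last row
      have h1l : 1 ≤ (i : ℕ) := by omega
      have hm1 : (i : ℕ) - 1 < n - 2 := by omega
      have hred : ∑ k ∈ Finset.range (n - 2), F k = F ((i : ℕ) - 1) + F (i : ℕ) := by
        rw [← Finset.sum_subset (s₁ := ({(i : ℕ) - 1, (i : ℕ)} : Finset ℕ))
          (by intro x hx; simp at hx; simp; omega)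
          (by
            intro k hk hk2
            simp at hk hk2
            rw [hF]; simp only
            rw [dif_pos hk, hQ0 k hk (by omega) (by omega) (by omega), zero_mul])]
        rw [Finset.sum_pair (by omega)]
      rw [hred, hF]; simp only
      rw [dif_pos hm1, dif_pos i.isLt]
      simp only [Fin.eta]
      have li : lbl i = 0 := by
        simp only [lbl, hil]
        rw [show n - 3 + 3 = n from by omega, ZMod.natCast_self]
      have lm1 : lbl (⟨(i : ℕ) - 1, hm1⟩ : Fin (n - 2)) = -1 := by
        simp only [lbl, hil]
        rw [show n - 3 - 1 + 3 = n - 1 from by omega, Nat.cast_sub (by omega),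
          ZMod.natCast_self, Nat.cast_one, zero_sub]
      have em : (-1 : ZMod n) + 1 = 0 := by ring
      have e01 : (0 : ZMod n) + 1 = 1 := zero_add 1
      have e0m : (0 : ZMod n) - 1 = -1 := zero_sub 1
      have hA : ang lam (-1) 0 ≠ 0 := by have := hang (-1); rwa [em] at this
      have hB : ang lam 0 1 ≠ 0 := by have := hang 0; rwa [zero_add] at this
      rw [Qmat_left lam i ⟨(i : ℕ) - 1, hm1⟩ (by show (i:ℕ) = ((i:ℕ) - 1) + 1; omega),
        Qmat_diag lam i i rfl]
      by_cases hij : i = j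
      · have hv : (i : ℕ) = (j : ℕ) := by rw [hij]
        rw [if_pos hij]
        have lj : lbl j = 0 := by rw [← hij, li]
        rw [Qinv_le lam ⟨(i : ℕ) - 1, hm1⟩ j (by show (i:ℕ) - 1 ≤ (j:ℕ); omega),
          Qinv_le lam i j (by show (i:ℕ) ≤ (j:ℕ); omega)]
        rw [lm1, li, lj, em, e01, e0m]
        field_simp
        simp only [ang]; ring
      · have hv : (j : ℕ) < (i : ℕ) := by
          have h2 := j.isLt
          have : (j : ℕ) ≠ (i : ℕ) := fun h => hij (Fin.ext h.symm)
          omega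
        rw [if_neg hij]
        rw [Qinv_ge lam ⟨(i : ℕ) - 1, hm1⟩ j (by show (j:ℕ) ≤ (i:ℕ) - 1; omega),
          Qinv_ge lam i j (by show (j:ℕ) ≤ (i:ℕ); omega)]
        rw [lm1, li, em, e01, e0m]
        field_simp
        simp only [ang]; ring
    · -- interior row
      have h1l : 1 ≤ (i : ℕ) := by omega
      have h2l : (i : ℕ) + 1 < n - 2 := by omega
      have hm1 : (i : ℕ) - 1 < n - 2 := by omega
      have hred : ∑ k ∈ Finset.range (n - 2), F k
          = F ((i : ℕ) - 1) + (F (i : ℕ) + F ((i : ℕ) + 1)) := by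
        rw [← Finset.sum_subset (s₁ := ({(i : ℕ) - 1, (i : ℕ), (i : ℕ) + 1} : Finset ℕ))
          (by intro x hx; simp at hx; simp; omega)
          (by
            intro k hk hk2
            simp at hk hk2
            rw [hF]; simp only
            rw [dif_pos hk, hQ0 k hk (by omega) (by omega) (by omega), zero_mul])]
        rw [Finset.sum_insert (by simp; omega), Finset.sum_pair (by omega)]
      rw [hred, hF]; simp only
      rw [dif_pos hm1, dif_pos i.isLt, dif_pos h2l]
      simp only [Fin.eta]
      have lm1 : lbl (⟨(i : ℕ) - 1, hm1⟩ : Fin (n - 2)) = lbl i - 1 := by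
        simp only [lbl]
        rw [show (i : ℕ) - 1 + 3 = (i : ℕ) + 2 from by omega]
        push_cast; ring
      have lp1 : lbl (⟨(i : ℕ) + 1, h2l⟩ : Fin (n - 2)) = lbl i + 1 := by
        simp only [lbl]; push_cast; ring
      have hA : ang lam (lbl i - 1) (lbl i) ≠ 0 := by
        have := hang (lbl i - 1); rwa [sub_add_cancel] at this
      have hB : ang lam (lbl i) (lbl i + 1) ≠ 0 := hang (lbl i)
      rw [Qmat_left lam i ⟨(i : ℕ) - 1, hm1⟩ (by show (i:ℕ) = ((i:ℕ) - 1) + 1; omega),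
        Qmat_diag lam i i rfl,
        Qmat_right lam i ⟨(i : ℕ) + 1, h2l⟩ rfl]
      rcases lt_trichotomy (j : ℕ) (i : ℕ) with hlt | heq | hgt
      · rw [if_neg (fun h => by rw [h] at hlt; omega)]
        rw [Qinv_ge lam ⟨(i : ℕ) - 1, hm1⟩ j (by show (j:ℕ) ≤ (i:ℕ) - 1; omega),
          Qinv_ge lam i j (by show (j:ℕ) ≤ (i:ℕ); omega),
          Qinv_ge lam ⟨(i : ℕ) + 1, h2l⟩ j (by show (j:ℕ) ≤ (i:ℕ) + 1; omega)]
        rw [lm1, lp1, sub_add_cancel]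
        field_simp
        simp only [ang]; ring
      · have hij : i = j := Fin.ext heq.symm
        rw [if_pos hij]
        have lj : lbl j = lbl i := by rw [← hij]
        rw [Qinv_le lam ⟨(i : ℕ) - 1, hm1⟩ j (by show (i:ℕ) - 1 ≤ (j:ℕ); omega),
          Qinv_le lam i j (by show (i:ℕ) ≤ (j:ℕ); omega),
          Qinv_ge lam ⟨(i : ℕ) + 1, h2l⟩ j (by show (j:ℕ) ≤ (i:ℕ) + 1; omega)]
        rw [lm1, lp1, lj, sub_add_cancel]
        field_simp
        simp only [ang]; ring
      · rw [if_neg (fun h => by rw [h] at hgt; omega)]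
        rw [Qinv_le lam ⟨(i : ℕ) - 1, hm1⟩ j (by show (i:ℕ) - 1 ≤ (j:ℕ); omega),
          Qinv_le lam i j (by show (i:ℕ) ≤ (j:ℕ); omega),
          Qinv_le lam ⟨(i : ℕ) + 1, h2l⟩ j (by show (i:ℕ) + 1 ≤ (j:ℕ); omega)]
        rw [lm1, lp1, sub_add_cancel]
        field_simp
        simp only [ang]; ring
end

section
/- Let [a,b,c,d,e] denote totally antisymmetric 5-brackets (vanishing when two labels coincide) satisfying the six-term relations ∂[abcdef] = 0, i.e. [bcdef] − [acdef] + [abdef] − [abcef] + [abcdf] − [abcde] = 0 for all labels. Then for any k, Σ_{s=3}^{k−2} Σ_{t=s+2}^{k} [1, s−1, s, t−1, t] = Σ_{s=2}^{k−3} Σ_{t=s+2}^{k−1} [k, s−1, s, t−1, t]. -/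
section helpers
variable {V : Type*} [AddCommGroup V]

lemma myInsertTop (F : ℤ → V) (a b : ℤ) (h : a ≤ b) :
    ∑ t ∈ Finset.Icc a b, F t = F b + ∑ t ∈ Finset.Icc a (b - 1), F t := by
  rw [show Finset.Icc a b = insert b (Finset.Icc a (b-1)) from by
    ext x; simp only [Finset.mem_insert, Finset.mem_Icc]; omega]
  rw [Finset.sum_insert (by simp only [Finset.mem_Icc]; omega)]

lemma myInsertBot (F : ℤ → V) (a b : ℤ) (h : a ≤ b) :
    ∑ t ∈ Finset.Icc a b, F t = F a + ∑ t ∈ Finset.Icc (a + 1) b, F t := by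
  rw [show Finset.Icc a b = insert a (Finset.Icc (a+1) b) from by
    ext x; simp only [Finset.mem_insert, Finset.mem_Icc]; omega]
  rw [Finset.sum_insert (by simp only [Finset.mem_Icc]; omega)]

lemma myTel (F : ℤ → V) (a : ℤ) : ∀ b : ℤ, a - 1 ≤ b →
    ∑ t ∈ Finset.Icc a b, (F (t - 1) - F t) = F (a - 1) - F b := by
  refine Int.le_induction ?_ ?_
  · rw [Finset.Icc_eq_empty (by omega)]; simp
  · intro n hn ih
    rw [myInsertTop _ a (n+1) (by omega)]
    simp only [show (n:ℤ) + 1 - 1 = n from by ring]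
    rw [ih]; abel

lemma myShift (F : ℤ → V) (a b : ℤ) :
    ∑ t ∈ Finset.Icc a b, F t = ∑ s ∈ Finset.Icc (a - 1) (b - 1), F (s + 1) := by
  rw [show Finset.Icc a b = Finset.map (addRightEmbedding 1) (Finset.Icc (a-1) (b-1)) from by
    rw [Finset.map_add_right_Icc]; congr 1 <;> ring]
  rw [Finset.sum_map]
  rfl

lemma mySwap (X : ℤ → ℤ → V) (k : ℤ) :
    ∑ s ∈ Finset.Icc 3 (k - 2), ∑ t ∈ Finset.Icc (s + 2) k, X s t
      = ∑ t ∈ Finset.Icc 5 k, ∑ s ∈ Finset.Icc 3 (t - 2), X s t := by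
  have h1 : ∀ s ∈ Finset.Icc (3:ℤ) (k-2),
      ∑ t ∈ Finset.Icc (s+2) k, X s t = ∑ t ∈ Finset.Icc (5:ℤ) k, if s + 2 ≤ t then X s t else 0 := by
    intro s hs
    simp only [Finset.mem_Icc] at hs
    rw [show Finset.Icc (s+2) k = (Finset.Icc (5:ℤ) k).filter (fun t => s + 2 ≤ t) from by
      ext x; simp only [Finset.mem_filter, Finset.mem_Icc]; omega]
    rw [Finset.sum_filter]
  rw [Finset.sum_congr rfl h1, Finset.sum_comm]
  refine Finset.sum_congr rfl fun t ht => ?_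
  simp only [Finset.mem_Icc] at ht
  rw [show Finset.Icc (3:ℤ) (t-2) = (Finset.Icc (3:ℤ) (k-2)).filter (fun s => s + 2 ≤ t) from by
    ext x; simp only [Finset.mem_filter, Finset.mem_Icc]; omega]
  rw [Finset.sum_filter]

end helpers

/-- The second `R`-invariant identity: for totally antisymmetric 5-brackets `[a,b,c,d,e]`
(vanishing on repeated labels) satisfying the six-term relations `∂[abcdef] = 0`, one has
`Σ_{s=3}^{k−2} Σ_{t=s+2}^{k} [1, s−1, s, t−1, t] = Σ_{s=2}^{k−3} Σ_{t=s+2}^{k−1} [k, s−1, s, t−1, t]`. -/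
theorem R_invariant_second_identity (V : Type*) [AddCommGroup V] [Module ℂ V]
    (f : (Fin 5 → ℤ) → V)
    (hA : ∀ (g : Fin 5 → ℤ) (σ : Equiv.Perm (Fin 5)),
      f (g ∘ σ) = (Equiv.Perm.sign σ : ℤ) • f g)
    (hRep : ∀ g : Fin 5 → ℤ, ¬Function.Injective g → f g = 0)
    (hSix : ∀ a b c d e x : ℤ,
      f ![b, c, d, e, x] - f ![a, c, d, e, x] + f ![a, b, d, e, x]
        - f ![a, b, c, e, x] + f ![a, b, c, d, x] - f ![a, b, c, d, e] = 0)
    (k : ℤ) :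
    ∑ s ∈ Finset.Icc 3 (k - 2), ∑ t ∈ Finset.Icc (s + 2) k, f ![1, s - 1, s, t - 1, t] =
      ∑ s ∈ Finset.Icc 2 (k - 3), ∑ t ∈ Finset.Icc (s + 2) (k - 1), f ![k, s - 1, s, t - 1, t] := by
  rcases lt_or_ge k 5 with hk | hk
  · rw [Finset.Icc_eq_empty (by omega : ¬(3:ℤ) ≤ k - 2),
      Finset.Icc_eq_empty (by omega : ¬(2:ℤ) ≤ k - 3)]
    simp
  -- repeated-label vanishing
  have z : ∀ (g : Fin 5 → ℤ) (i j : Fin 5), i ≠ j → g i = g j → f g = 0 := by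
    intro g i j hij hg
    exact hRep g fun hinj => hij (hinj hg)
  -- cyclic symmetry
  have cyc : ∀ a b c d e : ℤ, f ![a, b, c, d, e] = f ![e, a, b, c, d] := by
    intro a b c d e
    have h := hA ![e, a, b, c, d] (finRotate 5)
    have hc : (![e, a, b, c, d] ∘ (finRotate 5)) = ![a, b, c, d, e] := by
      funext i; fin_cases i <;> rfl
    have hs : Equiv.Perm.sign (finRotate 5) = 1 := by
      rw [show (5:ℕ) = 4 + 1 from rfl, sign_finRotate]
      exact Even.neg_one_pow (by decide)
    rw [hc, hs] at h
    simpa using h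
  -- six-term relation in the convenient form
  have key : ∀ s t : ℤ, f ![1, s - 1, s, t - 1, t]
      = f ![k, s - 1, s, t - 1, t]
        + (f ![1, s - 1, t - 1, t, k] - f ![1, s, t - 1, t, k])
        + (f ![1, s - 1, s, t - 1, k] - f ![1, s - 1, s, t, k]) := by
    intro s t
    have h6 := hSix 1 (s - 1) s (t - 1) t k
    rw [cyc (s - 1) s (t - 1) t k] at h6
    rw [sub_eq_zero] at h6
    rw [← h6]; abel
  -- piece 3 : the Q-telescope
  have hQ : ∑ s ∈ Finset.Icc 3 (k - 2), ∑ t ∈ Finset.Icc (s + 2) k,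
        (f ![1, s - 1, s, t - 1, k] - f ![1, s - 1, s, t, k])
      = ∑ t ∈ Finset.Icc 4 (k - 1), f ![1, t - 2, t - 1, t, k] := by
    have e1 : ∀ s ∈ Finset.Icc (3:ℤ) (k - 2),
        ∑ t ∈ Finset.Icc (s + 2) k, (f ![1, s - 1, s, t - 1, k] - f ![1, s - 1, s, t, k])
          = f ![1, s - 1, s, s + 1, k] := by
      intro s hs
      simp only [Finset.mem_Icc] at hs
      rw [myTel (fun t => f ![1, s - 1, s, t, k]) (s + 2) k (by omega)]
      simp only [show (s:ℤ) + 2 - 1 = s + 1 from by ring]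
      rw [z ![1, s - 1, s, k, k] 3 4 (by decide) rfl, sub_zero]
    rw [Finset.sum_congr rfl e1,
      myShift (fun t => f ![1, t - 2, t - 1, t, k]) 4 (k - 1)]
    apply Finset.sum_congr
    · congr 1; ring
    · intro s _
      simp only [show ∀ x : ℤ, x + 1 - 2 = x - 1 from fun x => by ring,
        show ∀ x : ℤ, x + 1 - 1 = x from fun x => by ring]
  -- piece 2 : the P-swap and telescope
  have hP : ∑ s ∈ Finset.Icc 3 (k - 2), ∑ t ∈ Finset.Icc (s + 2) k,
        (f ![1, s - 1, t - 1, t, k] - f ![1, s, t - 1, t, k])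
      = (∑ t ∈ Finset.Icc 5 k, f ![1, 2, t - 1, t, k])
        - ∑ t ∈ Finset.Icc 5 k, f ![1, t - 2, t - 1, t, k] := by
    rw [mySwap (fun s t => f ![1, s - 1, t - 1, t, k] - f ![1, s, t - 1, t, k]) k,
      ← Finset.sum_sub_distrib]
    apply Finset.sum_congr rfl
    intro t ht
    simp only [Finset.mem_Icc] at ht
    rw [myTel (fun s => f ![1, s, t - 1, t, k]) 3 (t - 2) (by omega)]
    norm_num
  -- combining the two telescoped sums
  have hG : (∑ t ∈ Finset.Icc 4 (k - 1), f ![1, t - 2, t - 1, t, k])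
      - ∑ t ∈ Finset.Icc 5 k, f ![1, t - 2, t - 1, t, k] = f ![1, 2, 3, 4, k] := by
    rw [myInsertBot (fun t => f ![1, t - 2, t - 1, t, k]) 4 (k - 1) (by omega),
      myInsertTop (fun t => f ![1, t - 2, t - 1, t, k]) 5 k (by omega)]
    simp only [show (4:ℤ) + 1 = 5 from by norm_num]
    rw [z ![1, k - 2, k - 1, k, k] 3 4 (by decide) rfl]
    norm_num
  -- the extra boundary sum
  have hP2 : (∑ t ∈ Finset.Icc 5 k, f ![1, 2, t - 1, t, k]) + f ![1, 2, 3, 4, k]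
      = ∑ t ∈ Finset.Icc 4 (k - 1), f ![k, 1, 2, t - 1, t] := by
    have h1 := myInsertBot (fun t => f ![1, 2, t - 1, t, k]) 4 k (by omega)
    have h2 := myInsertTop (fun t => f ![1, 2, t - 1, t, k]) 4 k (by omega)
    beta_reduce at h1 h2
    rw [z ![1, 2, k - 1, k, k] 3 4 (by decide) rfl, zero_add] at h2
    norm_num at h1
    rw [add_comm, ← h1, h2]
    exact Finset.sum_congr rfl fun t _ => cyc 1 2 (t - 1) t k
  -- piece 1 : the B-sum
  have hB : ∑ s ∈ Finset.Icc 3 (k - 2), ∑ t ∈ Finset.Icc (s + 2) k, f ![k, s - 1, s, t - 1, t]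
      = ∑ s ∈ Finset.Icc 3 (k - 3), ∑ t ∈ Finset.Icc (s + 2) (k - 1),
          f ![k, s - 1, s, t - 1, t] := by
    have e1 : ∀ s ∈ Finset.Icc (3:ℤ) (k - 2),
        ∑ t ∈ Finset.Icc (s + 2) k, f ![k, s - 1, s, t - 1, t]
          = ∑ t ∈ Finset.Icc (s + 2) (k - 1), f ![k, s - 1, s, t - 1, t] := by
      intro s hs
      simp only [Finset.mem_Icc] at hs
      rw [myInsertTop (fun t => f ![k, s - 1, s, t - 1, t]) (s + 2) k (by omega),
        z ![k, s - 1, s, k - 1, k] 0 4 (by decide) rfl, zero_add]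
    rw [Finset.sum_congr rfl e1,
      myInsertTop (fun s => ∑ t ∈ Finset.Icc (s + 2) (k - 1), f ![k, s - 1, s, t - 1, t])
        3 (k - 2) (by omega)]
    rw [show Finset.Icc (k - 2 + 2) (k - 1) = ∅ from Finset.Icc_eq_empty (by omega)]
    simp only [Finset.sum_empty, zero_add, show (k:ℤ) - 2 - 1 = k - 3 from by ring]
  -- the right-hand side
  have hR : ∑ s ∈ Finset.Icc 2 (k - 3), ∑ t ∈ Finset.Icc (s + 2) (k - 1),
        f ![k, s - 1, s, t - 1, t]
      = (∑ t ∈ Finset.Icc 4 (k - 1), f ![k, 1, 2, t - 1, t])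
        + ∑ s ∈ Finset.Icc 3 (k - 3), ∑ t ∈ Finset.Icc (s + 2) (k - 1),
            f ![k, s - 1, s, t - 1, t] := by
    rw [myInsertBot (fun s => ∑ t ∈ Finset.Icc (s + 2) (k - 1), f ![k, s - 1, s, t - 1, t])
      2 (k - 3) (by omega)]
    norm_num
  calc ∑ s ∈ Finset.Icc 3 (k - 2), ∑ t ∈ Finset.Icc (s + 2) k, f ![1, s - 1, s, t - 1, t]
      = ∑ s ∈ Finset.Icc 3 (k - 2), ∑ t ∈ Finset.Icc (s + 2) k,
          (f ![k, s - 1, s, t - 1, t]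
            + (f ![1, s - 1, t - 1, t, k] - f ![1, s, t - 1, t, k])
            + (f ![1, s - 1, s, t - 1, k] - f ![1, s - 1, s, t, k])) :=
        Finset.sum_congr rfl fun s _ => Finset.sum_congr rfl fun t _ => key s t
    _ = (∑ s ∈ Finset.Icc 3 (k - 2), ∑ t ∈ Finset.Icc (s + 2) k, f ![k, s - 1, s, t - 1, t])
        + (∑ s ∈ Finset.Icc 3 (k - 2), ∑ t ∈ Finset.Icc (s + 2) k,
            (f ![1, s - 1, t - 1, t, k] - f ![1, s, t - 1, t, k]))
        + (∑ s ∈ Finset.Icc 3 (k - 2), ∑ t ∈ Finset.Icc (s + 2) k,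
            (f ![1, s - 1, s, t - 1, k] - f ![1, s - 1, s, t, k])) := by
        simp only [Finset.sum_add_distrib]
    _ = ∑ s ∈ Finset.Icc 2 (k - 3), ∑ t ∈ Finset.Icc (s + 2) (k - 1),
          f ![k, s - 1, s, t - 1, t] := by
        rw [hB, hP, hQ, hR, ← hP2, ← hG]; abel
end

section
/- Let [a,b,c,d,e] be the NMHV five-bracket of momentum twistors, [abcde] = δ⁽⁴⁾(⟨bcde⟩η_a + ⟨cdea⟩η_b + ⟨deab⟩η_c + ⟨eabc⟩η_d + ⟨abcd⟩η_e) / (⟨bcde⟩⟨cdea⟩⟨deab⟩⟨eabc⟩⟨abcd⟩). If Z_y = w_x Z_x + w_a Z_a + w_b Z_b + w_c Z_c with w_x ≠ 0, then the residues of [abcdx] and [abcdy] at the pole ⟨abcd⟩ = 0 coincide; i.e. ⟨abcd⟩·([abcdx] − [abcdy]) vanishes on the locus ⟨abcd⟩ = 0. -/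
open MvPolynomial

/-- The 4-bracket `⟨abcd⟩ = det(Z_a Z_b Z_c Z_d)` of four momentum twistors. -/
noncomputable def fourBracket (a b c d : Fin 4 → ℂ) : ℂ :=
  Matrix.det (Matrix.of fun i j => ![a, b, c, d] j i)

/-- The numerator of the NMHV five-bracket: the Grassmann delta function
`δ⁽⁴⁾(⟨2345⟩η₁ + ⟨3451⟩η₂ + ⟨4512⟩η₃ + ⟨5123⟩η₄ + ⟨1234⟩η₅)`, with the Grassmann variables
of the five particles (carrying twistor labels `i₁,…,i₅` among six twistors) modelled as
formal (commuting) variables `X (i, A)`: the coefficients of the canonically ordered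
Grassmann monomials agree with those of this polynomial. -/
noncomputable def deltaNum (Z1 Z2 Z3 Z4 Z5 : Fin 4 → ℂ) (i1 i2 i3 i4 i5 : Fin 6) :
    MvPolynomial (Fin 6 × Fin 4) ℂ :=
  ∏ A : Fin 4,
    (C (fourBracket Z2 Z3 Z4 Z5) * X (i1, A) + C (fourBracket Z3 Z4 Z5 Z1) * X (i2, A)
      + C (fourBracket Z4 Z5 Z1 Z2) * X (i3, A) + C (fourBracket Z5 Z1 Z2 Z3) * X (i4, A)
      + C (fourBracket Z1 Z2 Z3 Z4) * X (i5, A))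

lemma fb_eq (a b c d : Fin 4 → ℂ) : fourBracket a b c d =
    a 0 * b 1 * c 2 * d 3 - a 0 * b 1 * d 2 * c 3 - a 0 * c 1 * b 2 * d 3 + a 0 * c 1 * d 2 * b 3 + a 0 * d 1 * b 2 * c 3 - a 0 * d 1 * c 2 * b 3 - b 0 * a 1 * c 2 * d 3 + b 0 * a 1 * d 2 * c 3 + b 0 * c 1 * a 2 * d 3 - b 0 * c 1 * d 2 * a 3 - b 0 * d 1 * a 2 * c 3 + b 0 * d 1 * c 2 * a 3 + c 0 * a 1 * b 2 * d 3 - c 0 * a 1 * d 2 * b 3 - c 0 * b 1 * a 2 * d 3 + c 0 * b 1 * d 2 * a 3 + c 0 * d 1 * a 2 * b 3 - c 0 * d 1 * b 2 * a 3 - d 0 * a 1 * b 2 * c 3 + d 0 * a 1 * c 2 * b 3 + d 0 * b 1 * a 2 * c 3 - d 0 * b 1 * c 2 * a 3 - d 0 * c 1 * a 2 * b 3 + d 0 * c 1 * b 2 * a 3 := by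
  show (Matrix.of fun i j => ![a, b, c, d] j i).det = _
  rw [show (Matrix.of fun i j => ![a, b, c, d] j i) =
      !![a 0, b 0, c 0, d 0; a 1, b 1, c 1, d 1; a 2, b 2, c 2, d 2; a 3, b 3, c 3, d 3] by
    ext i j
    fin_cases i <;> fin_cases j <;> rfl]
  rw [Matrix.det_succ_row_zero]
  simp [Fin.sum_univ_succ, Matrix.det_fin_three, Matrix.submatrix_apply, Fin.succAbove,
    Fin.castSucc, Fin.castAdd, Fin.castLE]
  ring


lemma fb_bcdy (Za Zb Zc Zd Zx : Fin 4 → ℂ) (wx wa wb wc : ℂ)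
    (habcd : fourBracket Za Zb Zc Zd = 0) :
    fourBracket Zb Zc Zd (wx • Zx + wa • Za + wb • Zb + wc • Zc)
      = wx * fourBracket Zb Zc Zd Zx := by
  simp only [fb_eq, Pi.add_apply, Pi.smul_apply, smul_eq_mul] at habcd ⊢
  linear_combination (-wa) * habcd

lemma fb_cdya (Za Zb Zc Zd Zx : Fin 4 → ℂ) (wx wa wb wc : ℂ)
    (habcd : fourBracket Za Zb Zc Zd = 0) :
    fourBracket Zc Zd (wx • Zx + wa • Za + wb • Zb + wc • Zc) Za
      = wx * fourBracket Zc Zd Zx Za := by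
  simp only [fb_eq, Pi.add_apply, Pi.smul_apply, smul_eq_mul] at habcd ⊢
  linear_combination (-wb) * habcd

lemma fb_dyab (Za Zb Zc Zd Zx : Fin 4 → ℂ) (wx wa wb wc : ℂ)
    (habcd : fourBracket Za Zb Zc Zd = 0) :
    fourBracket Zd (wx • Zx + wa • Za + wb • Zb + wc • Zc) Za Zb
      = wx * fourBracket Zd Zx Za Zb := by
  simp only [fb_eq, Pi.add_apply, Pi.smul_apply, smul_eq_mul] at habcd ⊢
  linear_combination (-wc) * habcd

lemma fb_yabc (Za Zb Zc Zd Zx : Fin 4 → ℂ) (wx wa wb wc : ℂ)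
    (habcd : fourBracket Za Zb Zc Zd = 0) :
    fourBracket (wx • Zx + wa • Za + wb • Zb + wc • Zc) Za Zb Zc
      = wx * fourBracket Zx Za Zb Zc := by
  simp only [fb_eq, Pi.add_apply, Pi.smul_apply, smul_eq_mul] at habcd ⊢
  linear_combination wx * (0:ℂ) * habcd

/-- If `Z_y = w_x Z_x + w_a Z_a + w_b Z_b + w_c Z_c` with `w_x ≠ 0`, then on the locus
`⟨abcd⟩ = 0` the residues of `[abcdx]` and `[abcdy]` at the pole `⟨abcd⟩` coincide: clearing
denominators, the numerator of `[abcdx]` times the remaining denominator brackets of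
`[abcdy]` equals the numerator of `[abcdy]` times the remaining denominator brackets of
`[abcdx]` (at the level of the coefficient of each Grassmann monomial). -/
theorem residues_match_at_pole (Za Zb Zc Zd Zx Zy : Fin 4 → ℂ) (wx wa wb wc : ℂ)
    (hwx : wx ≠ 0) (hZy : Zy = wx • Zx + wa • Za + wb • Zb + wc • Zc)
    (habcd : fourBracket Za Zb Zc Zd = 0) :
    deltaNum Za Zb Zc Zd Zx 0 1 2 3 4 *
        C (fourBracket Zb Zc Zd Zy * fourBracket Zc Zd Zy Za * fourBracket Zd Zy Za Zb *
            fourBracket Zy Za Zb Zc) =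
      deltaNum Za Zb Zc Zd Zy 0 1 2 3 5 *
        C (fourBracket Zb Zc Zd Zx * fourBracket Zc Zd Zx Za * fourBracket Zd Zx Za Zb *
            fourBracket Zx Za Zb Zc) := by
  subst hZy
  have h1 := fb_bcdy Za Zb Zc Zd Zx wx wa wb wc habcd
  have h2 := fb_cdya Za Zb Zc Zd Zx wx wa wb wc habcd
  have h3 := fb_dyab Za Zb Zc Zd Zx wx wa wb wc habcd
  have h4 := fb_yabc Za Zb Zc Zd Zx wx wa wb wc habcd
  have hnum : deltaNum Za Zb Zc Zd (wx • Zx + wa • Za + wb • Zb + wc • Zc) 0 1 2 3 5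
      = C (wx ^ 4) * deltaNum Za Zb Zc Zd Zx 0 1 2 3 4 := by
    unfold deltaNum
    rw [show (C (wx ^ 4) : MvPolynomial (Fin 6 × Fin 4) ℂ) = ∏ _A : Fin 4, C wx by
      simp [Finset.prod_const, map_pow]]
    rw [← Finset.prod_mul_distrib]
    refine Finset.prod_congr rfl fun A _ => ?_
    rw [h1, h2, h3, h4, habcd]
    simp only [map_zero, zero_mul, add_zero, map_mul]
    ring
  rw [hnum, h1, h2, h3, h4]
  simp only [map_mul, map_pow]
  ring
end

section
/- In the setting of the previous statement with the translational gauge B_{α̂1} = B_{α̂2} = 0, the relation C_{α̂ĵ} = B_{α̂î} Q_{îĵ} (î,ĵ ∈ {3,…,n}, Q the tridiagonal matrix above) forces the remaining two columns of C to equal C_{α̂1} = B_{α̂n}/⟨n1⟩ = Σ_{j=3}^{n} (⟨2j⟩/⟨12⟩) C_{α̂j} and C_{α̂2} = B_{α̂3}/⟨23⟩ = −Σ_{j=3}^{n} (⟨1j⟩/⟨12⟩) C_{α̂j}; consequently Σ_{i=1}^{n} C_{α̂ i} λ_i = 0. -/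
/-- The `k × n` matrix `C` with
`C_{α̂ i} = (⟨i,i+1⟩ B_{α̂,i−1} + ⟨i−1,i⟩ B_{α̂,i+1} + ⟨i+1,i−1⟩ B_{α̂ i}) / (⟨i−1,i⟩⟨i,i+1⟩)`. -/
noncomputable def Cmat {n k : ℕ} (lam : ZMod n → Fin 2 → ℂ) (Brow : Fin k → ZMod n → ℂ) :
    Fin k → ZMod n → ℂ := fun a i =>
  (ang lam i (i + 1) * Brow a (i - 1) + ang lam (i - 1) i * Brow a (i + 1)
      + ang lam (i + 1) (i - 1) * Brow a i) / (ang lam (i - 1) i * ang lam i (i + 1))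

set_option maxHeartbeats 1000000 in
lemma Cmat_sum_smul_eq_zero {n k : ℕ} [NeZero n] (lam : ZMod n → Fin 2 → ℂ)
    (Brow : Fin k → ZMod n → ℂ)
    (hang : ∀ i : ZMod n, ang lam i (i + 1) ≠ 0) (a : Fin k) :
    ∑ i : ZMod n, Cmat lam Brow a i • lam i = 0 := by
  have hang' : ∀ i : ZMod n, ang lam (i - 1) i ≠ 0 := fun i => by
    simpa using hang (i - 1)
  have split : ∀ i : ZMod n, Cmat lam Brow a i • lam i
      = (ang lam i (i+1) * Brow a (i-1) / (ang lam (i-1) i * ang lam i (i+1))) • lam i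
      + ((ang lam (i-1) i * Brow a (i+1) / (ang lam (i-1) i * ang lam i (i+1))) • lam i
      + (ang lam (i+1) (i-1) * Brow a i / (ang lam (i-1) i * ang lam i (i+1))) • lam i) := by
    intro i
    rw [← add_smul, ← add_smul]
    simp only [Cmat]
    congr 1
    ring
  rw [Finset.sum_congr rfl (fun i _ => split i), Finset.sum_add_distrib]
  have e1 : ∑ i : ZMod n,
      (ang lam i (i+1) * Brow a (i-1) / (ang lam (i-1) i * ang lam i (i+1))) • lam i
      = ∑ i : ZMod n,
      (ang lam (i+1) (i+1+1) * Brow a (i+1-1) /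
        (ang lam (i+1-1) (i+1) * ang lam (i+1) (i+1+1))) • lam (i+1) :=
    Fintype.sum_equiv (Equiv.subRight (1 : ZMod n)) _ _ fun x => by
      simp only [Equiv.subRight_apply, sub_add_cancel]
  rw [e1, Finset.sum_add_distrib]
  have e2 : ∑ i : ZMod n,
      (ang lam (i-1) i * Brow a (i+1) / (ang lam (i-1) i * ang lam i (i+1))) • lam i
      = ∑ i : ZMod n,
      (ang lam (i-1-1) (i-1) * Brow a (i-1+1) /
        (ang lam (i-1-1) (i-1) * ang lam (i-1) (i-1+1))) • lam (i-1) :=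
    Fintype.sum_equiv (Equiv.addRight (1 : ZMod n)) _ _ fun x => by
      simp only [Equiv.coe_addRight, add_sub_cancel_right]
  rw [e2, ← Finset.sum_add_distrib, ← Finset.sum_add_distrib]
  refine Finset.sum_eq_zero fun i _ => ?_
  rw [add_sub_cancel_right, sub_add_cancel]
  have h1 := hang i
  have h2 := hang (i + 1)
  have h3 : ang lam (i - 1 - 1) (i - 1) ≠ 0 := hang' (i - 1)
  have h4 : ang lam (i - 1) i ≠ 0 := hang' i
  funext x
  simp only [Pi.add_apply, Pi.smul_apply, smul_eq_mul, Pi.zero_apply]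
  fin_cases x <;>
  · simp only [Fin.zero_eta, Fin.mk_one]
    field_simp
    simp only [ang]
    ring

lemma sum_Icc_cast {n : ℕ} [NeZero n] (hn : 4 ≤ n) (f : ZMod n → ℂ) :
    ∑ j ∈ Finset.Icc 3 n, f ((j : ℕ) : ZMod n)
      = ∑ i ∈ (Finset.univ \ {1, 2} : Finset (ZMod n)), f i := by
  have hv1 : (1 : ZMod n).val = 1 := by
    have h : ((1 : ℕ) : ZMod n).val = 1 := ZMod.val_natCast_of_lt (by omega)
    simpa using h
  have hv2 : (2 : ZMod n).val = 2 := by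
    have h : ((2 : ℕ) : ZMod n).val = 2 := ZMod.val_natCast_of_lt (by omega)
    simpa using h
  refine Finset.sum_nbij' (fun j => ((j : ℕ) : ZMod n))
    (fun i => if i.val = 0 then n else i.val) ?_ ?_ ?_ ?_ ?_
  · intro j hj
    simp only [Finset.mem_Icc] at hj
    simp only [Finset.mem_sdiff, Finset.mem_univ, Finset.mem_insert, Finset.mem_singleton,
      true_and, not_or]
    have hval : ((j : ℕ) : ZMod n).val = j % n := ZMod.val_natCast n j
    constructor
    · intro h
      have h' := congrArg ZMod.val h
      rw [hval, hv1] at h'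
      rcases Nat.lt_or_ge j n with hlt | hge
      · rw [Nat.mod_eq_of_lt hlt] at h'; omega
      · have hjn : j = n := by omega
        rw [hjn, Nat.mod_self] at h'; omega
    · intro h
      have h' := congrArg ZMod.val h
      rw [hval, hv2] at h'
      rcases Nat.lt_or_ge j n with hlt | hge
      · rw [Nat.mod_eq_of_lt hlt] at h'; omega
      · have hjn : j = n := by omega
        rw [hjn, Nat.mod_self] at h'; omega
  · intro i hi
    simp only [Finset.mem_sdiff, Finset.mem_univ, Finset.mem_insert, Finset.mem_singleton,
      true_and, not_or] at hi
    obtain ⟨h1, h2⟩ := hi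
    by_cases h0 : i.val = 0
    · rw [if_pos h0, Finset.mem_Icc]
      omega
    · have hlt : i.val < n := ZMod.val_lt i
      have hne1 : i.val ≠ 1 := fun h => h1 (by rw [← ZMod.natCast_zmod_val i, h]; simp)
      have hne2 : i.val ≠ 2 := fun h => h2 (by rw [← ZMod.natCast_zmod_val i, h]; simp)
      rw [if_neg h0, Finset.mem_Icc]
      omega
  · intro j hj
    simp only [Finset.mem_Icc] at hj
    have hval : ((j : ℕ) : ZMod n).val = j % n := ZMod.val_natCast n j
    rcases Nat.lt_or_ge j n with hlt | hge
    · have : ((j : ℕ) : ZMod n).val ≠ 0 := by rw [hval, Nat.mod_eq_of_lt hlt]; omega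
      rw [if_neg this, hval, Nat.mod_eq_of_lt hlt]
    · have hjn : j = n := by omega
      subst hjn
      have : ((j : ℕ) : ZMod j).val = 0 := by rw [hval, Nat.mod_self]
      rw [if_pos this]
  · intro i hi
    by_cases h0 : i.val = 0
    · have hi0 : i = 0 := by
        have h := ZMod.natCast_zmod_val i
        rw [h0] at h; simpa using h.symm
      rw [if_pos h0, hi0, ZMod.natCast_self]
    · rw [if_neg h0, ZMod.natCast_zmod_val]
  · intro j hj
    rfl

lemma sum_ang_mul_Cmat {n k : ℕ} [NeZero n] (lam : ZMod n → Fin 2 → ℂ)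
    (Brow : Fin k → ZMod n → ℂ)
    (hang : ∀ i : ZMod n, ang lam i (i + 1) ≠ 0) (a : Fin k) (c : ZMod n) :
    ∑ i : ZMod n, ang lam c i * Cmat lam Brow a i = 0 := by
  have H := Cmat_sum_smul_eq_zero lam Brow hang a
  have H0 : ∑ i : ZMod n, Cmat lam Brow a i * lam i 0 = 0 := by
    have h := congrFun H 0
    simpa [Finset.sum_apply] using h
  have H1 : ∑ i : ZMod n, Cmat lam Brow a i * lam i 1 = 0 := by
    have h := congrFun H 1
    simpa [Finset.sum_apply] using h
  calc ∑ i : ZMod n, ang lam c i * Cmat lam Brow a i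
      = lam c 0 * ∑ i : ZMod n, Cmat lam Brow a i * lam i 1
        - lam c 1 * ∑ i : ZMod n, Cmat lam Brow a i * lam i 0 := by
        rw [Finset.mul_sum, Finset.mul_sum, ← Finset.sum_sub_distrib]
        exact Finset.sum_congr rfl fun i _ => by simp only [ang]; ring
    _ = 0 := by rw [H0, H1]; ring

lemma one_ne_two_zmod {n : ℕ} (hn : 4 ≤ n) : (1 : ZMod n) ≠ 2 := by
  have : NeZero n := ⟨by omega⟩
  intro h
  have h1 : (1 : ZMod n).val = 1 := by
    have h' : ((1 : ℕ) : ZMod n).val = 1 := ZMod.val_natCast_of_lt (by omega)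
    simpa using h'
  have h2 : (2 : ZMod n).val = 2 := by
    have h' : ((2 : ℕ) : ZMod n).val = 2 := ZMod.val_natCast_of_lt (by omega)
    simpa using h'
  rw [h, h2] at h1
  omega

/-- In the translational gauge `B_{α̂1} = B_{α̂2} = 0`, the remaining two columns of `C`
satisfy `C_{α̂1} = B_{α̂n}/⟨n1⟩ = Σ_{j=3}^{n} (⟨2j⟩/⟨12⟩) C_{α̂j}` and
`C_{α̂2} = B_{α̂3}/⟨23⟩ = −Σ_{j=3}^{n} (⟨1j⟩/⟨12⟩) C_{α̂j}`; consequently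
`Σ_{i=1}^{n} C_{α̂ i} λ_i = 0`. -/
theorem Cmat_gauge_fixed_columns {n k : ℕ} [NeZero n] (hn : 4 ≤ n)
    (lam : ZMod n → Fin 2 → ℂ) (Brow : Fin k → ZMod n → ℂ)
    (hang : ∀ i : ZMod n, ang lam i (i + 1) ≠ 0) (h12 : ang lam 1 2 ≠ 0)
    (hB1 : ∀ a, Brow a 1 = 0) (hB2 : ∀ a, Brow a 2 = 0) :
    (∀ a, Cmat lam Brow a 1 = Brow a ((n : ℕ) : ZMod n) / ang lam ((n : ℕ) : ZMod n) 1) ∧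
    (∀ a, Cmat lam Brow a 1 =
      ∑ j ∈ Finset.Icc 3 n, (ang lam 2 ((j : ℕ) : ZMod n) / ang lam 1 2) *
        Cmat lam Brow a ((j : ℕ) : ZMod n)) ∧
    (∀ a, Cmat lam Brow a 2 = Brow a 3 / ang lam 2 3) ∧
    (∀ a, Cmat lam Brow a 2 =
      -∑ j ∈ Finset.Icc 3 n, (ang lam 1 ((j : ℕ) : ZMod n) / ang lam 1 2) *
        Cmat lam Brow a ((j : ℕ) : ZMod n)) ∧
    (∀ a, ∑ i : ZMod n, Cmat lam Brow a i • lam i = 0) := by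
  have hn0 : ((n : ℕ) : ZMod n) = 0 := ZMod.natCast_self n
  have h01 : ang lam 0 1 ≠ 0 := by simpa using hang 0
  have h2eq : (1 : ZMod n) + 1 = 2 := one_add_one_eq_two
  have h3eq : (2 : ZMod n) + 1 = 3 := two_add_one_eq_three
  have h12'' : ang lam 1 2 ≠ 0 := h12
  have h23 : ang lam 2 3 ≠ 0 := by rw [← h3eq]; exact hang 2
  have hC1 : ∀ a, Cmat lam Brow a 1 = Brow a ((n : ℕ) : ZMod n) / ang lam ((n : ℕ) : ZMod n) 1 := by
    intro a
    rw [hn0]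
    simp only [Cmat]
    have e1 : (1 : ZMod n) - 1 = 0 := sub_self 1
    rw [e1, h2eq, hB1 a, hB2 a]
    field_simp
    ring
  have hC2 : ∀ a, Cmat lam Brow a 2 = Brow a 3 / ang lam 2 3 := by
    intro a
    simp only [Cmat]
    have e1 : (2 : ZMod n) - 1 = 1 := by ring
    rw [e1, h3eq, hB1 a, hB2 a]
    field_simp
    ring
  have hne : (1 : ZMod n) ≠ 2 := one_ne_two_zmod hn
  have hsum2 : ∀ a, ∑ i ∈ (Finset.univ \ {1, 2} : Finset (ZMod n)),
      ang lam 2 i * Cmat lam Brow a i = ang lam 1 2 * Cmat lam Brow a 1 := by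
    intro a
    rw [Finset.sum_sdiff_eq_sub (Finset.subset_univ _), sum_ang_mul_Cmat lam Brow hang a 2,
      Finset.sum_pair hne]
    have e22 : ang lam 2 2 = 0 := by simp only [ang]; ring
    have h21 : ang lam 2 1 = -ang lam 1 2 := by simp only [ang]; ring
    rw [e22, h21]
    ring
  have hsum1 : ∀ a, ∑ i ∈ (Finset.univ \ {1, 2} : Finset (ZMod n)),
      ang lam 1 i * Cmat lam Brow a i = -(ang lam 1 2 * Cmat lam Brow a 2) := by
    intro a
    rw [Finset.sum_sdiff_eq_sub (Finset.subset_univ _), sum_ang_mul_Cmat lam Brow hang a 1,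
      Finset.sum_pair hne]
    have e11 : ang lam 1 1 = 0 := by simp only [ang]; ring
    rw [e11]
    ring
  refine ⟨hC1, ?_, hC2, ?_, fun a => Cmat_sum_smul_eq_zero lam Brow hang a⟩
  · intro a
    rw [sum_Icc_cast hn (fun i => (ang lam 2 i / ang lam 1 2) * Cmat lam Brow a i)]
    have hd : ∑ i ∈ (Finset.univ \ {1, 2} : Finset (ZMod n)),
        (ang lam 2 i / ang lam 1 2) * Cmat lam Brow a i
        = (∑ i ∈ (Finset.univ \ {1, 2} : Finset (ZMod n)),
            ang lam 2 i * Cmat lam Brow a i) / ang lam 1 2 := by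
      rw [Finset.sum_div]
      exact Finset.sum_congr rfl fun i _ => by ring
    rw [hd, hsum2 a]
    field_simp
  · intro a
    rw [sum_Icc_cast hn (fun i => (ang lam 1 i / ang lam 1 2) * Cmat lam Brow a i)]
    have hd : ∑ i ∈ (Finset.univ \ {1, 2} : Finset (ZMod n)),
        (ang lam 1 i / ang lam 1 2) * Cmat lam Brow a i
        = (∑ i ∈ (Finset.univ \ {1, 2} : Finset (ZMod n)),
            ang lam 1 i * Cmat lam Brow a i) / ang lam 1 2 := by
      rw [Finset.sum_div]
      exact Finset.sum_congr rfl fun i _ => by ring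
    rw [hd, hsum1 a]
    field_simp
end

section
/- Let c ∈ ℂ⁶ and Z_1,…,Z_6 ∈ ℂ⁴ satisfy Σ_i c_i Z_i = 0 and the consecutive constraints ⟪i,i+1⟫ = 0 (indices mod 6), where ⟪ij⟫ = Z_i^T Ω Z_j with Ω the standard symplectic form. Suppose the cyclic orthogonality relations c_3⟪35⟫c_5 = c_2⟪26⟫c_6, c_4⟪46⟫c_6 = c_3⟪31⟫c_1, c_5⟪51⟫c_1 = c_4⟪42⟫c_2 hold and ⟪26⟫, ⟪31⟫, ⟨6123⟩ are nonzero. Then c_1 c_2 = (⟨3456⟩/⟨6123⟩) c_4 c_5, where ⟨ijkl⟩ = ⟪ij⟫⟪kl⟫ + ⟪ik⟫⟪lj⟫ + ⟪il⟫⟪jk⟫. -/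
/-- The standard symplectic form `Ω` on `ℂ⁴`, with block form `[[0,-I],[I,0]]`. -/
noncomputable def OmegaMat : Matrix (Fin 4) (Fin 4) ℂ :=
  !![0, 0, -1, 0; 0, 0, 0, -1; 1, 0, 0, 0; 0, 1, 0, 0]

/-- The symplectic 2-bracket `⟪ij⟫ = Z_i^A Z_j^B Ω_{AB}` of two momentum twistors. -/
noncomputable def dbr (Zi Zj : Fin 4 → ℂ) : ℂ :=
  ∑ A : Fin 4, ∑ B : Fin 4, Zi A * Zj B * OmegaMat A B

/-- The 4-bracket expressed through 2-brackets:
`⟨ijkl⟩ = ⟪ij⟫⟪kl⟫ + ⟪ik⟫⟪lj⟫ + ⟪il⟫⟪jk⟫`. -/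
noncomputable def br4 (Zi Zj Zk Zl : Fin 4 → ℂ) : ℂ :=
  dbr Zi Zj * dbr Zk Zl + dbr Zi Zk * dbr Zl Zj + dbr Zi Zl * dbr Zj Zk

/-- Explicit formula for the 2-bracket. -/
lemma dbr_formula (X Y : Fin 4 → ℂ) :
    dbr X Y = X 2 * Y 0 + X 3 * Y 1 - X 0 * Y 2 - X 1 * Y 3 := by
  simp [dbr, OmegaMat, Fin.sum_univ_four, Matrix.cons_val_zero, Matrix.cons_val_one,
    Matrix.head_cons, Matrix.cons_val_fin_one, Matrix.head_fin_const, Matrix.vecHead,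
    Matrix.vecTail]
  ring

/-- Antisymmetry of the 2-bracket. -/
lemma dbr_anti (X Y : Fin 4 → ℂ) : dbr X Y = - dbr Y X := by
  rw [dbr_formula, dbr_formula]; ring

/-- The 2-bracket vanishes on the diagonal. -/
lemma dbr_self (X : Fin 4 → ℂ) : dbr X X = 0 := by
  rw [dbr_formula]; ring

/-- Expansion of sums over `ZMod 6`. -/
lemma zmod6_sum (f : ZMod 6 → ℂ) : ∑ i : ZMod 6, f i = f 0 + f 1 + f 2 + f 3 + f 4 + f 5 := by
  rw [show (Finset.univ : Finset (ZMod 6)) = {0,1,2,3,4,5} from by decide]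
  rw [Finset.sum_insert (by decide), Finset.sum_insert (by decide),
      Finset.sum_insert (by decide), Finset.sum_insert (by decide),
      Finset.sum_insert (by decide), Finset.sum_singleton]
  ring

/-- For the 6-point ABJM momentum twistor Grassmannian: if `Σ c_i Z_i = 0`, the consecutive
constraints `⟪i,i+1⟫ = 0` hold (indices mod 6), the three cyclic orthogonality relations hold,
and `⟪26⟫, ⟪31⟫, ⟨6123⟩` are nonzero, then `c₁ c₂ = (⟨3456⟩/⟨6123⟩) c₄ c₅`. -/
theorem c1c2_eq_ratio_c4c5 (Z : ZMod 6 → Fin 4 → ℂ) (c : ZMod 6 → ℂ)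
    (hcZ : ∑ i : ZMod 6, c i • Z i = 0)
    (hcons : ∀ i : ZMod 6, dbr (Z i) (Z (i + 1)) = 0)
    (h1 : c 3 * dbr (Z 3) (Z 5) * c 5 = c 2 * dbr (Z 2) (Z 6) * c 6)
    (h2 : c 4 * dbr (Z 4) (Z 6) * c 6 = c 3 * dbr (Z 3) (Z 1) * c 1)
    (h3 : c 5 * dbr (Z 5) (Z 1) * c 1 = c 4 * dbr (Z 4) (Z 2) * c 2)
    (h26 : dbr (Z 2) (Z 6) ≠ 0) (h31 : dbr (Z 3) (Z 1) ≠ 0)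
    (h6123 : br4 (Z 6) (Z 1) (Z 2) (Z 3) ≠ 0) :
    c 1 * c 2 = (br4 (Z 3) (Z 4) (Z 5) (Z 6) / br4 (Z 6) (Z 1) (Z 2) (Z 3)) * (c 4 * c 5) := by
  have h60 : (6 : ZMod 6) = 0 := by decide
  rw [h60] at h1 h2 h26 h6123 ⊢
  -- component equations from `Σ c_i Z_i = 0`
  have hsum : ∀ A : Fin 4, c 0 * Z 0 A + c 1 * Z 1 A + c 2 * Z 2 A + c 3 * Z 3 A
      + c 4 * Z 4 A + c 5 * Z 5 A = 0 := by
    intro A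
    have h := congrFun hcZ A
    rw [Finset.sum_apply, zmod6_sum (fun i => (c i • Z i) A)] at h
    simpa using h
  -- pairing `Σ c_i Z_i = 0` against each `Z j`
  have key : ∀ j : ZMod 6, c 0 * dbr (Z j) (Z 0) + c 1 * dbr (Z j) (Z 1)
      + c 2 * dbr (Z j) (Z 2) + c 3 * dbr (Z j) (Z 3) + c 4 * dbr (Z j) (Z 4)
      + c 5 * dbr (Z j) (Z 5) = 0 := by
    intro j
    simp only [dbr_formula]
    linear_combination Z j 2 * hsum 0 + Z j 3 * hsum 1 - Z j 0 * hsum 2 - Z j 1 * hsum 3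
  -- consecutive brackets vanish
  have d01 : dbr (Z 0) (Z 1) = 0 := by rw [show (1 : ZMod 6) = 0 + 1 by decide]; exact hcons 0
  have d12 : dbr (Z 1) (Z 2) = 0 := by rw [show (2 : ZMod 6) = 1 + 1 by decide]; exact hcons 1
  have d23 : dbr (Z 2) (Z 3) = 0 := by rw [show (3 : ZMod 6) = 2 + 1 by decide]; exact hcons 2
  have d34 : dbr (Z 3) (Z 4) = 0 := by rw [show (4 : ZMod 6) = 3 + 1 by decide]; exact hcons 3
  have d45 : dbr (Z 4) (Z 5) = 0 := by rw [show (5 : ZMod 6) = 4 + 1 by decide]; exact hcons 4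
  have d50 : dbr (Z 5) (Z 0) = 0 := by
    have := hcons 5; rw [show (5 + 1 : ZMod 6) = 0 by decide] at this; exact this
  -- pairing relations at j = 3 and j = 0 (= 6)
  have e3 : c 0 * dbr (Z 3) (Z 0) + c 1 * dbr (Z 3) (Z 1) + c 5 * dbr (Z 3) (Z 5) = 0 := by
    linear_combination key 3 - c 2 * dbr_anti (Z 3) (Z 2) + c 2 * d23
      - c 3 * dbr_self (Z 3) - c 4 * d34
  have e0 : c 2 * dbr (Z 2) (Z 0) + c 3 * dbr (Z 3) (Z 0) + c 4 * dbr (Z 4) (Z 0) = 0 := by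
    linear_combination -(key 0) + c 0 * dbr_self (Z 0) + c 1 * d01
      + c 2 * dbr_anti (Z 0) (Z 2) + c 3 * dbr_anti (Z 0) (Z 3) + c 4 * dbr_anti (Z 0) (Z 4)
      + c 5 * dbr_anti (Z 0) (Z 5) - c 5 * d50
  -- the two 4-brackets reduce to products of 2-brackets
  have hB1 : br4 (Z 3) (Z 4) (Z 5) (Z 0) = - (dbr (Z 3) (Z 5) * dbr (Z 4) (Z 0)) := by
    unfold br4
    linear_combination dbr (Z 5) (Z 0) * d34 + dbr (Z 3) (Z 0) * d45
      + dbr (Z 3) (Z 5) * dbr_anti (Z 0) (Z 4)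
  have hB2 : br4 (Z 0) (Z 1) (Z 2) (Z 3) = - (dbr (Z 2) (Z 0) * dbr (Z 3) (Z 1)) := by
    unfold br4
    linear_combination dbr (Z 2) (Z 3) * d01 + dbr (Z 3) (Z 1) * dbr_anti (Z 0) (Z 2)
      + dbr (Z 0) (Z 3) * d12
  rw [hB1, hB2, neg_div_neg_eq, div_mul_eq_mul_div, eq_div_iff (mul_ne_zero h26 h31)]
  by_cases hc0 : c 0 = 0
  · -- case c₆ = 0
    have hc31 : c 3 * dbr (Z 3) (Z 1) * c 1 = 0 := by
      linear_combination -h2 + (c 4 * dbr (Z 4) (Z 0)) * hc0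
    rcases mul_eq_zero.mp hc31 with h' | hc1
    · rcases mul_eq_zero.mp h' with hc3 | hq
      · linear_combination (c 2 * dbr (Z 2) (Z 0)) * e3 - (c 5 * dbr (Z 3) (Z 5)) * e0
          - (c 2 * dbr (Z 2) (Z 0) * dbr (Z 3) (Z 0)) * hc0
          + (c 5 * dbr (Z 3) (Z 5) * dbr (Z 3) (Z 0)) * hc3
      · exact absurd hq h31
    · linear_combination -(dbr (Z 4) (Z 0) * c 4) * e3
        + (c 2 * dbr (Z 2) (Z 0) * dbr (Z 3) (Z 1) + dbr (Z 4) (Z 0) * c 4 * dbr (Z 3) (Z 1)) * hc1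
        + (dbr (Z 4) (Z 0) * c 4 * dbr (Z 3) (Z 0)) * hc0
  · by_cases hc3 : c 3 = 0
    · -- case c₃ = 0, c₆ ≠ 0
      have hc2 : c 2 = 0 := by
        have h' : c 2 * dbr (Z 2) (Z 0) * c 0 = 0 := by
          linear_combination -h1 + (dbr (Z 3) (Z 5) * c 5) * hc3
        have := (mul_eq_zero.mp h').resolve_right hc0
        exact (mul_eq_zero.mp this).resolve_right h26
      have hc4s : c 4 * dbr (Z 4) (Z 0) = 0 := by
        have h' : c 4 * dbr (Z 4) (Z 0) * c 0 = 0 := by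
          linear_combination h2 + (dbr (Z 3) (Z 1) * c 1) * hc3
        exact (mul_eq_zero.mp h').resolve_right hc0
      linear_combination (c 1 * dbr (Z 2) (Z 0) * dbr (Z 3) (Z 1)) * hc2
        - (dbr (Z 3) (Z 5) * c 5) * hc4s
    · -- generic case: c₃ ≠ 0, c₆ ≠ 0, multiply the two orthogonality relations
      have hmain : c 3 * c 0 * (c 1 * c 2 * (dbr (Z 2) (Z 0) * dbr (Z 3) (Z 1)))
          = c 3 * c 0 * (dbr (Z 3) (Z 5) * dbr (Z 4) (Z 0) * (c 4 * c 5)) := by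
        linear_combination -(c 4 * dbr (Z 4) (Z 0) * c 0) * h1
          - (c 2 * dbr (Z 2) (Z 0) * c 0) * h2
      exact mul_left_cancel₀ (mul_ne_zero hc3 hc0) hmain
end
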